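/- Let G be a connected cubic graph with a Kotzig-frame F and a perfect coloring α of F. Then the graph R(G,F,α)_C, obtained from the 3-row graph R(G,F,α) by identifying each column to a single vertex, is eulerian (every vertex has even degree). -/

import Mathlib

/-- The bicolored subgraph of `F`: the edges of `F` colored `a` or `b` by the
edge coloring `αE`. -/
def bicolored {V : Type*} (F : SimpleGraph V) (αE : Sym2 V → Fin 3) (a b : Fin 3) :
    SimpleGraph V where
  Adj v w := F.Adj v w ∧ (αE s(v, w) = a ∨ αE s(v, w) = b)
  symm := by
    constructor
    intro v w h
    refine ⟨h.1.symm, ?_⟩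
    rw [Sym2.eq_swap]
    exact h.2
  loopless := ⟨fun v h => F.irrefl h.1⟩

/-- The subgraph of `G` induced (as a graph on `V`) by a set `S`. -/
private def insideGraph {V : Type*} (G : SimpleGraph V) (S : Set V) : SimpleGraph V where
  Adj v w := G.Adj v w ∧ v ∈ S ∧ w ∈ S
  symm := ⟨fun v w h => ⟨h.1.symm, h.2.2, h.2.1⟩⟩
  loopless := ⟨fun v h => G.irrefl h.1⟩

/-- Let `G` be a connected cubic graph with a Kotzig-frame `F` — a spanning
subgraph each of whose components `K` has an even number of vertices and is
either a cycle (a 2-regular component) or a subdivision of a Kotzig graph — and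
let `(αV, αE)` be a perfect coloring of `F`: on every cycle component all
vertices and edges get one common color; on every other component (a subdivision
of a Kotzig graph, i.e. all degrees are `2` or `3`, some vertex is 3-valent and
some vertex is 2-valent) the two edges at each 2-valent vertex get the color of
that vertex, the three edges at each 3-valent vertex get pairwise distinct colors
(so the induced edge coloring of the underlying cubic graph is proper), and for
each pair of distinct colors `a ≠ b` the edges of `F` colored `a` or `b` inside
the component form a single cycle through all of its 3-valent vertices (so the
induced coloring of the underlying Kotzig graph is a Kotzig-coloring).

Then the graph `R(G,F,α)_C`, obtained from the 3-row graph `R(G,F,α)` by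
identifying each column to a single vertex, is eulerian; that is, for every
component `K` of `F`, the degree of the corresponding vertex of `R(G,F,α)_C` —
the number of edges of `G` joining `K` to the other components of `F` — is
even. -/

theorem stmt17 {V : Type*} [Fintype V] (G : SimpleGraph V)
    (hGconn : G.Connected)
    (hcubic : ∀ v, (G.neighborSet v).ncard = 3)
    (F : SimpleGraph V) (hFG : F ≤ G)
    (heven : ∀ K : F.ConnectedComponent, Even K.supp.ncard)
    (αV : V → Fin 3) (αE : Sym2 V → Fin 3)
    (hframe : ∀ K : F.ConnectedComponent,
      -- C-component: a cycle, all of whose vertices and edges get one color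
      ((∀ v ∈ K.supp, (F.neighborSet v).ncard = 2) ∧
        ∃ a : Fin 3, ∀ v ∈ K.supp, αV v = a ∧ ∀ w, F.Adj v w → αE s(v, w) = a)
      ∨
      -- K-component: a perfectly colored subdivision of a Kotzig graph
      ((∀ v ∈ K.supp, (F.neighborSet v).ncard = 2 ∨ (F.neighborSet v).ncard = 3) ∧
       (∃ v ∈ K.supp, (F.neighborSet v).ncard = 3) ∧
       (∃ v ∈ K.supp, (F.neighborSet v).ncard = 2) ∧
       (∀ v ∈ K.supp, (F.neighborSet v).ncard = 2 →
          ∀ w, F.Adj v w → αE s(v, w) = αV v) ∧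
       (∀ v ∈ K.supp, ∀ w w', F.Adj v w → F.Adj v w' → w ≠ w' →
          αE s(v, w) ≠ αE s(v, w')) ∧
       (∀ a b : Fin 3, a ≠ b →
          -- the edges colored `a` or `b` form a single cycle containing
          -- every 3-valent vertex of the component
          (∀ v ∈ K.supp,
            ((bicolored F αE a b).neighborSet v).Nonempty →
              ((bicolored F αE a b).neighborSet v).ncard = 2) ∧
          (∀ v ∈ K.supp, (F.neighborSet v).ncard = 3 →
              ((bicolored F αE a b).neighborSet v).Nonempty) ∧
          (∀ v ∈ K.supp, ∀ w ∈ K.supp,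
            ((bicolored F αE a b).neighborSet v).Nonempty →
            ((bicolored F αE a b).neighborSet w).Nonempty →
              (bicolored F αE a b).Reachable v w)))) :
    ∀ K : F.ConnectedComponent,
      Even ({e : Sym2 V | e ∈ G.edgeSet ∧
        ∃ v w, e = s(v, w) ∧ v ∈ K.supp ∧ w ∉ K.supp}.ncard) := by
  classical
  intro K
  set S : Set V := K.supp with hS
  set D : Finset (V × V) :=
    Finset.univ.filter (fun p : V × V => G.Adj p.1 p.2 ∧ p.1 ∈ S ∧ p.2 ∉ S) with hD
  have hmemD : ∀ p : V × V, p ∈ D ↔ G.Adj p.1 p.2 ∧ p.1 ∈ S ∧ p.2 ∉ S := by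
    intro p; simp [hD]
  have hset : {e : Sym2 V | e ∈ G.edgeSet ∧ ∃ v w, e = s(v, w) ∧ v ∈ S ∧ w ∉ S}
      = (fun p : V × V => s(p.1, p.2)) '' ↑D := by
    ext e
    simp only [Set.mem_setOf_eq, Set.mem_image, Finset.mem_coe]
    constructor
    · rintro ⟨he, v, w, rfl, hv, hw⟩
      exact ⟨(v, w), (hmemD (v, w)).2 ⟨(SimpleGraph.mem_edgeSet G).1 he, hv, hw⟩, rfl⟩
    · rintro ⟨⟨v, w⟩, hmem, rfl⟩
      obtain ⟨ha, hv, hw⟩ := (hmemD (v, w)).1 hmem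
      exact ⟨(SimpleGraph.mem_edgeSet G).2 ha, v, w, rfl, hv, hw⟩
  have hinj : Set.InjOn (fun p : V × V => s(p.1, p.2)) ↑D := by
    rintro ⟨v, w⟩ hvw ⟨v', w'⟩ hvw' h
    rw [Finset.mem_coe, hmemD] at hvw hvw'
    simp only [Sym2.eq_iff] at h
    rcases h with ⟨rfl, rfl⟩ | ⟨rfl, rfl⟩
    · rfl
    · exact absurd hvw'.2.1 hvw.2.2
  rw [hset, Set.ncard_image_of_injOn hinj, Set.ncard_coe_finset]
  -- fiberwise count
  have hfib : D.card = ∑ v ∈ S.toFinset,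
      (D.filter (fun p => p.1 = v)).card := by
    refine Finset.card_eq_sum_card_fiberwise ?_
    intro p hp
    exact Set.mem_toFinset.2 ((hmemD p).1 hp).2.1
  set a : V → ℕ := fun v => ((G.neighborFinset v).filter (fun w => w ∈ S)).card with ha
  set b : V → ℕ := fun v => ((G.neighborFinset v).filter (fun w => w ∉ S)).card with hb
  have hdeg : ∀ v, (G.neighborFinset v).card = 3 := by
    intro v
    have := hcubic v
    rwa [Set.ncard_eq_toFinset_card', ← SimpleGraph.neighborFinset_def] at this
  have hab : ∀ v, a v + b v = 3 := by
    intro v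
    rw [ha, hb]
    simpa using Finset.card_filter_add_card_filter_not
      (s := G.neighborFinset v) (p := fun w => w ∈ S) ▸ (hdeg v)
  have hfibcard : ∀ v ∈ S.toFinset, (D.filter (fun p => p.1 = v)).card = b v := by
    intro v hv
    rw [Set.mem_toFinset] at hv
    have : D.filter (fun p => p.1 = v)
        = ((G.neighborFinset v).filter (fun w => w ∉ S)).image (fun w => (v, w)) := by
      ext ⟨x, y⟩
      simp only [Finset.mem_filter, Finset.mem_image, hmemD, SimpleGraph.mem_neighborFinset,
        Prod.mk.injEq]
      constructor
      · rintro ⟨⟨hadj, _, hy⟩, rfl⟩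
        exact ⟨y, ⟨hadj, hy⟩, rfl, rfl⟩
      · rintro ⟨w, ⟨hadj, hw⟩, rfl, rfl⟩
        exact ⟨⟨hadj, hv, hw⟩, rfl⟩
    rw [this, Finset.card_image_of_injective _ (fun x y h => congrArg Prod.snd h)]
  -- even sum of a over S via handshake on inside graph
  have hEvenA : Even (∑ v ∈ S.toFinset, a v) := by
    set H : SimpleGraph V := insideGraph G S with hH
    have hHd : ∀ v ∈ S.toFinset, H.degree v = a v := by
      intro v hv
      rw [Set.mem_toFinset] at hv
      rw [SimpleGraph.degree, ha]
      congr 1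
      ext w
      simp only [SimpleGraph.mem_neighborFinset, Finset.mem_filter, hH, insideGraph]
      tauto
    have hHzero : ∀ v ∈ (Finset.univ : Finset V), v ∉ S.toFinset → H.degree v = 0 := by
      intro v _ hv
      rw [Set.mem_toFinset] at hv
      rw [SimpleGraph.degree, Finset.card_eq_zero]
      ext w
      simp only [SimpleGraph.mem_neighborFinset, hH, insideGraph, Finset.notMem_empty, iff_false]
      rintro ⟨_, h, _⟩
      exact hv h
    have : ∑ v ∈ S.toFinset, a v = ∑ v : V, H.degree v := by
      rw [← Finset.sum_subset (Finset.subset_univ S.toFinset) hHzero]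
      exact Finset.sum_congr rfl (fun v hv => (hHd v hv).symm)
    rw [this, SimpleGraph.sum_degrees_eq_twice_card_edges]
    exact even_two_mul _
  have hEven3S : Even (∑ v ∈ S.toFinset, a v + ∑ v ∈ S.toFinset, b v) := by
    rw [← Finset.sum_add_distrib]
    have : ∑ v ∈ S.toFinset, (a v + b v) = 3 * S.toFinset.card := by
      rw [Finset.sum_congr rfl (fun v _ => hab v), Finset.sum_const, smul_eq_mul, mul_comm]
    rw [this]
    have hK : Even S.ncard := heven K
    rw [Set.ncard_eq_toFinset_card'] at hK
    exact hK.mul_left 3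
  have hEvenB : Even (∑ v ∈ S.toFinset, b v) := by
    rcases Nat.even_add.1 hEven3S with h
    exact h.1 hEvenA
  rw [hfib, Finset.sum_congr rfl hfibcard]
  exact hEvenB
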